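/- For any connected graph G of order n, 2n + 1 ≤ γ_rdR(G ⊙ K₁) ≤ 3n. -/

import Mathlib

open SimpleGraph Finset

/-- A restrained double Roman dominating function. -/
def IsRDRD {α : Type*} (G : SimpleGraph α) (f : α → ℕ) : Prop :=
  (∀ v, f v ≤ 3) ∧
  (∀ v, f v = 0 →
    (∃ u, G.Adj v u ∧ f u = 3) ∨
    (∃ u w, u ≠ w ∧ G.Adj v u ∧ G.Adj v w ∧ f u = 2 ∧ f w = 2)) ∧
  (∀ v, f v = 1 → ∃ u, G.Adj v u ∧ 2 ≤ f u) ∧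
  (∀ v, f v = 0 → ∃ u, G.Adj v u ∧ f u = 0)

/-- The restrained double Roman domination number. -/
noncomputable def gammaRdR {α : Type*} (G : SimpleGraph α) [Fintype α] : ℕ :=
  sInf {w | ∃ f, IsRDRD G f ∧ ∑ v, f v = w}

/-- The strong product of two simple graphs. -/
def strongProd {α β : Type*} (G : SimpleGraph α) (H : SimpleGraph β) :
    SimpleGraph (α × β) where
  Adj p q := p ≠ q ∧ (G.Adj p.1 q.1 ∨ p.1 = q.1) ∧ (H.Adj p.2 q.2 ∨ p.2 = q.2)
  symm := by
    constructor
    rintro p q ⟨h1, h2, h3⟩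
    exact ⟨h1.symm, h2.imp (fun h => G.adj_symm h) Eq.symm, h3.imp (fun h => H.adj_symm h) Eq.symm⟩
  loopless := by constructor; rintro p ⟨h1, _⟩; exact h1 rfl

/-- The cardinal (direct/tensor) product of two simple graphs. -/
def cardProd {α β : Type*} (G : SimpleGraph α) (H : SimpleGraph β) :
    SimpleGraph (α × β) where
  Adj p q := G.Adj p.1 q.1 ∧ H.Adj p.2 q.2
  symm := by constructor; rintro p q ⟨h1, h2⟩; exact ⟨h1.symm, h2.symm⟩
  loopless := by constructor; rintro p ⟨h1, _⟩; exact G.loopless.irrefl _ h1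

/-- The corona of two simple graphs. -/
def corona {α β : Type*} (G : SimpleGraph α) (H : SimpleGraph β) :
    SimpleGraph (α ⊕ α × β) where
  Adj x y :=
    match x, y with
    | .inl u, .inl v => G.Adj u v
    | .inl u, .inr (v, _) => u = v
    | .inr (v, _), .inl u => u = v
    | .inr (u, a), .inr (v, b) => u = v ∧ H.Adj a b
  symm := by
    constructor
    rintro (u | ⟨u, a⟩) (v | ⟨v, b⟩) h
    · exact h.symm
    · exact h
    · exact h
    · exact ⟨h.1.symm, h.2.symm⟩
  loopless := by
    constructor
    rintro (u | ⟨u, a⟩) h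
    · exact G.loopless.irrefl _ h
    · exact H.loopless.irrefl _ h.2

theorem stmt13 {α : Type*} [Fintype α] (G : SimpleGraph α) (hG : G.Connected) :
    2 * Fintype.card α + 1 ≤ gammaRdR (corona G (⊥ : SimpleGraph (Fin 1))) ∧
      gammaRdR (corona G (⊥ : SimpleGraph (Fin 1))) ≤ 3 * Fintype.card α := by

  classical
  haveI : Nonempty α := hG.nonempty
  set n := Fintype.card α with hn
  have hn1 : 1 ≤ n := Fintype.card_pos
  have hmem : (3 * n) ∈ {w | ∃ f, IsRDRD (corona G (⊥ : SimpleGraph (Fin 1))) f ∧ ∑ v, f v = w} := by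
    refine ⟨Sum.elim (fun _ => 2) (fun _ => 1), ⟨?_, ?_, ?_, ?_⟩, ?_⟩
    · rintro (v | v) <;> simp
    · rintro (v | v) h <;> simp at h
    · rintro (v | ⟨v, i⟩) h
      · simp at h
      · exact ⟨Sum.inl v, rfl, by simp⟩
    · rintro (v | v) h <;> simp at h
    · rw [Fintype.sum_sum_type]
      simp [Fintype.sum_prod_type, Fin.sum_univ_one, hn]
      ring
  refine ⟨?_, Nat.sInf_le hmem⟩
  apply le_csInf ⟨_, hmem⟩
  rintro w ⟨f, ⟨h3, h0, h1, hr⟩, rfl⟩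
  -- pendant values are at least 1
  have hA : ∀ v : α, 1 ≤ f (Sum.inr (v, 0)) := by
    intro v
    by_contra h
    have h0' : f (Sum.inr (v, (0 : Fin 1))) = 0 := by omega
    obtain ⟨u, hu, hfu⟩ := hr _ h0'
    have huv : u = Sum.inl v := by
      rcases u with u | ⟨u, j⟩
      · have : u = v := hu
        rw [this]
      · exact absurd hu.2 (by simp)
    subst huv
    rcases h0 _ h0' with ⟨u, hu2, hfu2⟩ | ⟨u, w', hne, hu2, hw2, hfu2, hfw2⟩
    · rcases u with u | ⟨u, j⟩
      · have : u = v := hu2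
        subst this; omega
      · exact absurd hu2.2 (by simp)
    · rcases u with u | ⟨u, j⟩
      · have : u = v := hu2
        subst this; omega
      · exact absurd hu2.2 (by simp)
  have hB : ∀ v : α, 2 ≤ f (Sum.inl v) + f (Sum.inr (v, 0)) := by
    intro v
    rcases Nat.lt_or_ge (f (Sum.inr (v, 0))) 2 with h | h
    · have h1' : f (Sum.inr (v, (0 : Fin 1))) = 1 := by have := hA v; omega
      obtain ⟨u, hu, hfu⟩ := h1 _ h1'
      have huv : u = Sum.inl v := by
        rcases u with u | ⟨u, j⟩
        · have : u = v := hu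
          rw [this]
        · exact absurd hu.2 (by simp)
      subst huv; omega
    · omega
  have hw : ∑ v : α ⊕ α × Fin 1, f v
      = ∑ v : α, (f (Sum.inl v) + f (Sum.inr (v, 0))) := by
    rw [Fintype.sum_sum_type, Finset.sum_add_distrib]
    congr 1
    rw [Fintype.sum_prod_type]
    simp [Fin.sum_univ_one]
  rw [hw]
  by_cases hex : ∃ v : α, 3 ≤ f (Sum.inl v) + f (Sum.inr (v, 0))
  · obtain ⟨v0, hv0⟩ := hex
    have hsplit := Finset.add_sum_erase Finset.univ
      (fun v => f (Sum.inl v) + f (Sum.inr (v, 0))) (Finset.mem_univ v0)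
    have hcard : (Finset.univ.erase v0).card = n - 1 := by
      rw [Finset.card_erase_of_mem (Finset.mem_univ v0), Finset.card_univ]
    have hrest : (n - 1) * 2 ≤ ∑ v ∈ Finset.univ.erase v0,
        (f (Sum.inl v) + f (Sum.inr (v, 0))) := by
      calc (n - 1) * 2 = (Finset.univ.erase v0).card • 2 := by rw [hcard, smul_eq_mul]
      _ ≤ _ := Finset.card_nsmul_le_sum _ _ _ (fun x _ => hB x)
    beta_reduce at hsplit
    omega
  · exfalso
    push_neg at hex
    have hall : ∀ v : α, f (Sum.inl v) = 0 ∧ f (Sum.inr (v, 0)) = 2 := by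
      intro v
      have h2 := hB v
      have h3' := hex v
      have hAv := hA v
      rcases Nat.lt_or_ge (f (Sum.inr (v, 0))) 2 with h | h
      · have h1' : f (Sum.inr (v, (0 : Fin 1))) = 1 := by omega
        obtain ⟨u, hu, hfu⟩ := h1 _ h1'
        have huv : u = Sum.inl v := by
          rcases u with u | ⟨u, j⟩
          · have : u = v := hu
            rw [this]
          · exact absurd hu.2 (by simp)
        subst huv; omega
      · omega
    obtain ⟨v0⟩ := ‹Nonempty α›
    have h00 : f (Sum.inl v0) = 0 := (hall v0).1
    have key : ∀ u : α ⊕ α × Fin 1, (corona G (⊥ : SimpleGraph (Fin 1))).Adj (Sum.inl v0) u →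
        f u ≠ 3 ∧ (f u = 2 → u = Sum.inr (v0, 0)) := by
      rintro (u | ⟨u, j⟩) hu
      · have := (hall u).1
        constructor <;> omega
      · have huv : v0 = u := hu
        subst huv
        have hj : j = 0 := Subsingleton.elim j 0
        subst hj
        have := (hall v0).2
        exact ⟨by omega, fun _ => rfl⟩
    rcases h0 _ h00 with ⟨u, hu, hfu⟩ | ⟨u, w', hne, hu, hw', hfu, hfw⟩
    · exact (key u hu).1 hfu
    · have e1 := (key u hu).2 hfu
      have e2 := (key w' hw').2 hfw
      exact hne (e1.trans e2.symm)
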